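/- Let t be a nonnegative integer and n an integer with n ≥ max(8(t+1)^3, 40(t+2)). Let i be an integer with (2n−1)/(4π(t+2)) − 1 ≤ i ≤ (2n−1)(1 − 1/(4π(t+2))) + 1. Then for every θ in the interval [(4i−1)π/(4n−2), (4i+1)π/(4n−2)], the quantity (−1)^i · (n·sin(nθ) − (n−1)·sin((n−1)θ) + 2·Σ_{j=1}^{t} (−1)^{j+t} · j · sin(2jθ)) is strictly positive. -/

import Mathlib

set_option maxHeartbeats 1000000

open Real


private lemma gauss_sum_aux (t : ℕ) : ∑ j ∈ Finset.Icc 1 t, (j:ℝ) = (t:ℝ)*((t:ℝ)+1)/2 := by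
  induction t with
  | zero => simp
  | succ k ih =>
    rw [← Finset.insert_Icc_right_eq_Icc_add_one (by omega), Finset.sum_insert (by simp), ih]
    push_cast; ring

theorem stmt_13 (t : ℕ) (n : ℕ) (hn : max (8*(t+1)^3) (40*(t+2)) ≤ n) (i : ℤ)
    (hi₁ : (2*(n : ℝ) - 1) / (4*π*((t : ℝ) + 2)) - 1 ≤ (i : ℝ))
    (hi₂ : (i : ℝ) ≤ (2*(n : ℝ) - 1) * (1 - 1 / (4*π*((t : ℝ) + 2))) + 1) :
    ∀ θ ∈ Set.Icc ((4*(i : ℝ) - 1)*π / (4*(n : ℝ) - 2)) ((4*(i : ℝ) + 1)*π / (4*(n : ℝ) - 2)),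
      0 < (-1 : ℝ)^i *
        ((n : ℝ) * sin (n * θ) - ((n : ℝ) - 1) * sin (((n : ℝ) - 1) * θ) +
          2 * ∑ j ∈ Finset.Icc 1 t, (-1 : ℝ)^(j + t) * (j : ℝ) * sin (2*(j : ℝ) * θ)) := by
  intro θ hθ
  obtain ⟨hθ1, hθ2⟩ := hθ
  have hπ : (3.14 : ℝ) < π := Real.pi_gt_d2
  have hπ' : π < 3.15 := Real.pi_lt_d2
  have hπ0 : (0:ℝ) < π := by linarith
  have htR : (0:ℝ) ≤ (t:ℝ) := Nat.cast_nonneg t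
  have ht2 : (0:ℝ) < (t:ℝ) + 2 := by linarith
  -- cast the size hypotheses
  have hn1 : (8*(t+1)^3 : ℕ) ≤ n := le_trans (le_max_left _ _) hn
  have hn2 : (40*(t+2) : ℕ) ≤ n := le_trans (le_max_right _ _) hn
  have hn1' : 8*((t:ℝ)+1)^3 ≤ (n:ℝ) := by exact_mod_cast hn1
  have hn2' : 40*((t:ℝ)+2) ≤ (n:ℝ) := by exact_mod_cast hn2
  set m : ℝ := 2*(n:ℝ) - 1 with hm_def
  clear_value m
  have hmt : 16*((t:ℝ)+1)^3 - 1 ≤ m := by rw [hm_def]; linarith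
  have hmt2 : 80*((t:ℝ)+2) - 1 ≤ m := by rw [hm_def]; linarith
  have hmpos : (0:ℝ) < m := by linarith
  have hd : (0:ℝ) < 4*(n:ℝ) - 2 := by rw [hm_def] at hmpos; linarith
  have hθ1' : (4*(i:ℝ) - 1)*π ≤ θ * (4*(n:ℝ) - 2) := (div_le_iff₀ hd).1 hθ1
  have hθ2' : θ * (4*(n:ℝ) - 2) ≤ (4*(i:ℝ) + 1)*π := (le_div_iff₀ hd).1 hθ2
  set y : ℝ := m*θ - 2*(i:ℝ)*π with hy_def
  clear_value y
  have haux : 2*y = θ*(4*(n:ℝ)-2) - 4*(i:ℝ)*π := by rw [hy_def, hm_def]; ring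
  have hy1 : -(π/2) ≤ y := by linarith
  have hy2 : y ≤ π/2 := by linarith
  -- the trigonometric identity
  have hsq : (-1:ℝ)^i * (-1:ℝ)^i = 1 := by
    rcases Int.even_or_odd i with h | h
    · rw [h.neg_one_zpow]; norm_num
    · rw [h.neg_one_zpow]; norm_num
  have e1 : (n:ℝ)*θ = (y+θ)/2 + (i:ℝ)*π := by rw [hy_def, hm_def]; ring
  have e2 : ((n:ℝ)-1)*θ = (y-θ)/2 + (i:ℝ)*π := by rw [hy_def, hm_def]; ring
  have s1 : sin ((n:ℝ)*θ) = (-1:ℝ)^i * sin ((y+θ)/2) := by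
    rw [e1, Real.sin_add_int_mul_pi]
  have s2 : sin (((n:ℝ)-1)*θ) = (-1:ℝ)^i * sin ((y-θ)/2) := by
    rw [e2, Real.sin_add_int_mul_pi]
  have hA : sin ((y+θ)/2) = sin (y/2) * cos (θ/2) + cos (y/2) * sin (θ/2) := by
    rw [show (y+θ)/2 = y/2 + θ/2 by ring, Real.sin_add]
  have hB : sin ((y-θ)/2) = sin (y/2) * cos (θ/2) - cos (y/2) * sin (θ/2) := by
    rw [show (y-θ)/2 = y/2 - θ/2 by ring, Real.sin_sub]
  have hid : (-1:ℝ)^i * ((n:ℝ) * sin ((n:ℝ) * θ) - ((n:ℝ) - 1) * sin (((n:ℝ) - 1) * θ))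
      = m * (cos (y/2) * sin (θ/2)) + sin (y/2) * cos (θ/2) := by
    rw [s1, s2, hA, hB, hm_def]
    linear_combination ((n:ℝ) * (sin (y/2) * cos (θ/2) + cos (y/2) * sin (θ/2))
      - ((n:ℝ) - 1) * (sin (y/2) * cos (θ/2) - cos (y/2) * sin (θ/2))) * hsq
  -- bound for the sum
  have hgauss := gauss_sum_aux t
  set S : ℝ := ∑ j ∈ Finset.Icc 1 t, (-1 : ℝ)^(j + t) * (j : ℝ) * sin (2*(j : ℝ) * θ)
    with hS_def
  clear_value S
  have hsum : |S| ≤ (t:ℝ)*((t:ℝ)+1)/2 := by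
    rw [hS_def]
    calc |∑ j ∈ Finset.Icc 1 t, (-1 : ℝ)^(j + t) * (j : ℝ) * sin (2*(j : ℝ) * θ)|
        ≤ ∑ j ∈ Finset.Icc 1 t, |(-1 : ℝ)^(j + t) * (j : ℝ) * sin (2*(j : ℝ) * θ)| :=
          Finset.abs_sum_le_sum_abs _ _
      _ ≤ ∑ j ∈ Finset.Icc 1 t, (j:ℝ) := by
          apply Finset.sum_le_sum
          intro j hj
          rw [abs_mul, abs_mul, abs_pow, abs_neg, abs_one, one_pow, one_mul, Nat.abs_cast]
          exact mul_le_of_le_one_right (Nat.cast_nonneg j) (Real.abs_sin_le_one _)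
      _ = (t:ℝ)*((t:ℝ)+1)/2 := hgauss
  have habs1 : |(-1:ℝ)^i| = 1 := by
    rcases Int.even_or_odd i with h | h
    · rw [h.neg_one_zpow, abs_one]
    · rw [h.neg_one_zpow, abs_neg, abs_one]
  have hSbnd : -((t:ℝ)*((t:ℝ)+1)) ≤ (-1:ℝ)^i * (2*S) := by
    have h1 : |(-1:ℝ)^i * (2*S)| = 2*|S| := by
      rw [abs_mul, habs1, one_mul, abs_mul]; norm_num
    have h2 := neg_abs_le ((-1:ℝ)^i * (2*S))
    rw [h1] at h2
    linarith
  -- cosine lower bound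
  have hyabs : |y/2| ≤ π/4 := abs_le.2 ⟨by linarith, by linarith⟩
  have hcos : (7/10 : ℝ) ≤ cos (y/2) := by
    have h1 : cos (π/4) ≤ cos |y/2| :=
      Real.cos_le_cos_of_nonneg_of_le_pi (abs_nonneg _) (by linarith) hyabs
    rw [Real.cos_abs, Real.cos_pi_div_four] at h1
    have h2 : (7/5:ℝ) ≤ Real.sqrt 2 :=
      Real.le_sqrt_of_sq_le (by norm_num)
    linarith
  -- bounds on θ/2
  set X : ℝ := 1/(4*((t:ℝ)+2)) - 5*π/(4*m) with hX_def
  clear_value X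
  have hXpos : 0 < X := by
    rw [hX_def]
    rw [sub_pos, div_lt_div_iff₀ (by linarith) (by linarith)]
    have h1 : (5*π)*(4*((t:ℝ)+2)) ≤ 63*((t:ℝ)+2) := by
      have := mul_le_mul_of_nonneg_right (show 20*π ≤ 63 by linarith) (le_of_lt ht2)
      linarith
    linarith [hmt2]
  have hP : (0:ℝ) < 4*π*((t:ℝ)+2) := by positivity
  have hi1' : m ≤ ((i:ℝ)+1) * (4*π*((t:ℝ)+2)) := by
    have h2 : m/(4*π*((t:ℝ)+2)) ≤ (i:ℝ) + 1 := by linarith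
    exact (div_le_iff₀ hP).1 h2
  have hlow : X ≤ θ/2 := by
    have key : 4*m*X ≤ 4*m*(θ/2) := by
      have e : 4*m*X = m/((t:ℝ)+2) - 5*π := by
        rw [hX_def]; field_simp
      have e2 : m/((t:ℝ)+2) ≤ 4*π*((i:ℝ)+1) := by
        rw [div_le_iff₀ ht2]; linarith [hi1']
      have e3 : 4*m*(θ/2) = θ*(4*(n:ℝ)-2) := by rw [hm_def]; ring
      rw [e, e3]; linarith
    exact le_of_mul_le_mul_left key (by linarith)
  have hi2' : 4*π*((t:ℝ)+2)*(i:ℝ) ≤ 4*π*((t:ℝ)+2)*m - m + 4*π*((t:ℝ)+2) := by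
    have h0 : (i:ℝ) - 1 ≤ m - m/(4*π*((t:ℝ)+2)) := by
      have e : m*(1 - 1/(4*π*((t:ℝ)+2))) = m - m/(4*π*((t:ℝ)+2)) := by ring
      linarith [hi₂]
    have h1 := mul_le_mul_of_nonneg_right h0 hP.le
    have h2 : m/(4*π*((t:ℝ)+2)) * (4*π*((t:ℝ)+2)) = m := div_mul_cancel₀ _ (ne_of_gt hP)
    have h3 : ((i:ℝ) - 1) * (4*π*((t:ℝ)+2)) = 4*π*((t:ℝ)+2)*(i:ℝ) - 4*π*((t:ℝ)+2) := by ring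
    have h4 : (m - m/(4*π*((t:ℝ)+2))) * (4*π*((t:ℝ)+2))
        = 4*π*((t:ℝ)+2)*m - m/(4*π*((t:ℝ)+2)) * (4*π*((t:ℝ)+2)) := by ring
    linarith [h1]
  have hhigh : θ/2 ≤ π - X := by
    have key : 4*m*(θ/2) ≤ 4*m*(π - X) := by
      have e : 4*m*(π-X) = 4*m*π - m/((t:ℝ)+2) + 5*π := by
        rw [hX_def]; field_simp; ring
      have e3 : 4*m*(θ/2) = θ*(4*(n:ℝ)-2) := by rw [hm_def]; ring
      have e4 : m/((t:ℝ)+2) * ((t:ℝ)+2) = m := div_mul_cancel₀ _ (by linarith)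
      have key2 : ((4*(i:ℝ)+1)*π)*((t:ℝ)+2) ≤ (4*m*π - m/((t:ℝ)+2) + 5*π)*((t:ℝ)+2) := by
        have h5 : (4*m*π - m/((t:ℝ)+2) + 5*π)*((t:ℝ)+2)
            = 4*m*π*((t:ℝ)+2) - m/((t:ℝ)+2)*((t:ℝ)+2) + 5*π*((t:ℝ)+2) := by ring
        rw [h5, e4]
        linarith [hi2']
      have key3 := le_of_mul_le_mul_right key2 ht2
      rw [e, e3]
      linarith [hθ2']
    exact le_of_mul_le_mul_left key (by linarith)
  -- sine lower bound (Jordan)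
  have hθhalf0 : 0 ≤ θ/2 := le_trans hXpos.le hlow
  have hsin : 2/π * X ≤ sin (θ/2) := by
    rcases le_total (θ/2) (π/2) with h | h
    · calc 2/π * X ≤ 2/π * (θ/2) := by
            apply mul_le_mul_of_nonneg_left hlow (by positivity)
        _ ≤ sin (θ/2) := Real.mul_le_sin hθhalf0 h
    · rw [← Real.sin_pi_sub]
      calc 2/π * X ≤ 2/π * (π - θ/2) := by
            apply mul_le_mul_of_nonneg_left (by linarith) (by positivity)
        _ ≤ sin (π - θ/2) := Real.mul_le_sin (by linarith) (by linarith)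
  -- main term lower bound
  have hm1 : 7/10*(2/π*X) ≤ cos (y/2) * sin (θ/2) :=
    mul_le_mul hcos hsin (mul_nonneg (by positivity) hXpos.le)
      (le_trans (by norm_num) hcos)
  have hm2 : 7/10*(2/π*X)*m ≤ m * (cos (y/2) * sin (θ/2)) := by
    calc 7/10*(2/π*X)*m = m*(7/10*(2/π*X)) := by ring
      _ ≤ m * (cos (y/2) * sin (θ/2)) := mul_le_mul_of_nonneg_left hm1 hmpos.le
  -- cross term lower bound
  have hcross : -1 ≤ sin (y/2) * cos (θ/2) := by
    have p1 : 0 ≤ (1 + sin (y/2)) * (1 + cos (θ/2)) :=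
      mul_nonneg (by linarith [Real.neg_one_le_sin (y/2)]) (by linarith [Real.neg_one_le_cos (θ/2)])
    have p2 : 0 ≤ (1 - sin (y/2)) * (1 - cos (θ/2)) :=
      mul_nonneg (by linarith [Real.sin_le_one (y/2)]) (by linarith [Real.cos_le_one (θ/2)])
    linarith [p1, p2]
  -- the numeric inequality
  have hfinal : (t:ℝ)*((t:ℝ)+1) + 1 < 7/10*(2/π*X)*m := by
    have e : 7/10*(2/π*X)*m = 7*m/(20*π*((t:ℝ)+2)) - 7/4 := by
      rw [hX_def]; field_simp; ring
    rw [e]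
    rw [show (t:ℝ)*((t:ℝ)+1) + 1 = ((t:ℝ)^2+(t:ℝ)+11/4) - 7/4 by ring]
    have h20 : (0:ℝ) < 20*π*((t:ℝ)+2) := by positivity
    have h5 : ((t:ℝ)^2+(t:ℝ)+11/4) * (20*π*((t:ℝ)+2)) < 7*m := by
      have hb : ((t:ℝ)^2+(t:ℝ)+11/4) * (20*π*((t:ℝ)+2))
          ≤ ((t:ℝ)^2+(t:ℝ)+11/4) * (63*((t:ℝ)+2)) := by
        apply mul_le_mul_of_nonneg_left _ (by positivity)
        have := mul_le_mul_of_nonneg_right (show 20*π ≤ 63 by linarith) (le_of_lt ht2)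
        linarith
      have hc : ((t:ℝ)^2+(t:ℝ)+11/4) * (63*((t:ℝ)+2)) + 1 < 7*m := by
        linarith [pow_nonneg htR 3, sq_nonneg (t:ℝ), hmt, hmt2, htR]
      linarith
    have := (lt_div_iff₀ h20).2 h5
    linarith [(lt_div_iff₀ h20).2 h5]
  -- assemble
  have hsplit : (-1 : ℝ)^i *
        ((n : ℝ) * sin ((n:ℝ) * θ) - ((n : ℝ) - 1) * sin (((n : ℝ) - 1) * θ) + 2 * S)
      = (-1:ℝ)^i * ((n : ℝ) * sin ((n:ℝ) * θ) - ((n : ℝ) - 1) * sin (((n : ℝ) - 1) * θ))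
        + (-1:ℝ)^i * (2*S) := by ring
  rw [hsplit, hid]
  linarith
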